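/- Let c > 1. Define a_0 = 1, a_k = (-1)^k c^k / ∏_{l=1}^{k}(c^l - 1) for k ≥ 1, and b_0 = 1, b_k = ∏_{l=1}^{k} c^l / ∏_{l=1}^{k}(c^l - 1) for k ≥ 1. Then for every integer n ≥ 1, ∑_{k=0}^{n} b_{n-k} a_k = 0. -/

import Mathlib

open Finset

theorem aldous_shields_inverse_toeplitz (c : ℝ) (hc : 1 < c) (a b : ℕ → ℝ)
    (ha0 : a 0 = 1)
    (ha : ∀ k : ℕ, 1 ≤ k →
      a k = (-1 : ℝ) ^ k * c ^ k / ∏ l ∈ Finset.Icc 1 k, (c ^ l - 1))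
    (hb0 : b 0 = 1)
    (hb : ∀ k : ℕ, 1 ≤ k →
      b k = (∏ l ∈ Finset.Icc 1 k, c ^ l) / ∏ l ∈ Finset.Icc 1 k, (c ^ l - 1))
    (n : ℕ) (hn : 1 ≤ n) :
    ∑ k ∈ Finset.range (n + 1), b (n - k) * a k = 0 := by
  have hc0 : (0:ℝ) < c := lt_trans one_pos hc
  have hpow : ∀ k : ℕ, 1 ≤ k → (1:ℝ) < c ^ k := fun k hk =>
    one_lt_pow₀ hc (by omega)
  have hne : ∀ k : ℕ, 1 ≤ k → c ^ k - 1 ≠ 0 := fun k hk =>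
    ne_of_gt (by linarith [hpow k hk])
  have hDpos : ∀ k : ℕ, (0:ℝ) < ∏ l ∈ Finset.Icc 1 k, (c ^ l - 1) := by
    intro k
    apply Finset.prod_pos
    intro l hl
    have : 1 ≤ l := (Finset.mem_Icc.mp hl).1
    linarith [hpow l this]
  have hDne : ∀ k : ℕ, (∏ l ∈ Finset.Icc 1 k, (c ^ l - 1)) ≠ 0 :=
    fun k => ne_of_gt (hDpos k)
  -- recurrences
  have arec : ∀ k : ℕ, a (k + 1) = -c / (c ^ (k + 1) - 1) * a k := by
    intro k
    rcases Nat.eq_zero_or_pos k with rfl | hk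
    · rw [ha 1 le_rfl, ha0]
      simp [pow_one]
    · rw [ha (k + 1) (by omega), ha k hk,
        Finset.prod_Icc_succ_top (by omega : 1 ≤ k + 1)]
      have h1 := hDne k
      have h2 := hne (k + 1) (by omega)
      field_simp
      ring
  have brec : ∀ k : ℕ, b (k + 1) = c ^ (k + 1) / (c ^ (k + 1) - 1) * b k := by
    intro k
    rcases Nat.eq_zero_or_pos k with rfl | hk
    · rw [hb 1 le_rfl, hb0]
      simp [pow_one]
    · rw [hb (k + 1) (by omega), hb k hk,
        Finset.prod_Icc_succ_top (by omega : 1 ≤ k + 1),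
        Finset.prod_Icc_succ_top (by omega : 1 ≤ k + 1)]
      have h1 := hDne k
      have h2 := hne (k + 1) (by omega)
      field_simp
  have hnne : c ^ n - 1 ≠ 0 := hne n hn
  have key : ∀ j : ℕ, ∀ m : ℕ, j + 1 + m = n →
      ∑ i ∈ Finset.range (j + 1), b (n - i) * a i
        = c ^ (m + 1) * b m * a j / (c ^ n - 1) := by
    intro j
    induction j with
    | zero =>
      intro m hm
      have hn' : n = m + 1 := by omega
      subst hn'
      rw [Finset.sum_range_one, ha0, Nat.sub_zero, brec m]
      have h2 := hne (m + 1) (by omega)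
      field_simp
    | succ j ih =>
      intro m hm
      rw [Finset.sum_range_succ, ih (m + 1) (by omega)]
      have hsub : n - (j + 1) = m + 1 := by omega
      rw [hsub, arec j, brec m]
      have hX := hne (j + 1) (by omega)
      have hY := hne (m + 1) (by omega)
      have hcn : c ^ n = c ^ (j + 1) * c ^ (m + 1) := by
        rw [← pow_add]; congr 1; omega
      rw [hcn] at hnne ⊢
      have hnne2 : c ^ (m + 1) * c ^ (j + 1) - 1 ≠ 0 := by rwa [mul_comm]
      field_simp
      ring
  obtain ⟨t, rfl⟩ : ∃ t, n = t + 1 := ⟨n - 1, by omega⟩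
  rw [Finset.sum_range_succ, key t 0 (by omega), Nat.sub_self, hb0, arec t]
  field_simp
  ring
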